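/- For every integer k ≥ 1, the alternating zeta value ζ̂(k) = ∑_{j=1}^{∞} (−1)^{j−1}/j^k satisfies ζ̂(k) = ∫_0^{1/2} f_{k−1}(x) dx = (1/4) · f_k(1/2). -/

import Mathlib

open Filter

/-- The generalized harmonic numbers: `genH k n = H_n^{(k)}`, defined by `H_n^{(0)} = 1`
and `H_n^{(k)} = ∑_{j=1}^{n} H_j^{(k−1)}/j` for `k ≥ 1`. -/
noncomputable def genH : ℕ → ℕ → ℝ
  | 0, _ => 1
  | (k+1), n => ∑ j ∈ Finset.Icc 1 n, genH k j / (j : ℝ)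

section Helpers
open Finset MeasureTheory

lemma genH_zero' (n : ℕ) : genH 0 n = 1 := rfl

lemma genH_succ_def (k n : ℕ) : genH (k+1) n = ∑ j ∈ Finset.Icc 1 n, genH k j / (j : ℝ) := rfl

lemma genH_nonneg (k n : ℕ) : 0 ≤ genH k n := by
  induction k generalizing n with
  | zero => exact zero_le_one
  | succ k ih => exact Finset.sum_nonneg fun j _ => div_nonneg (ih j) (Nat.cast_nonneg j)

lemma genH_le (k : ℕ) : ∀ n : ℕ, genH k (n+1) ≤ (n:ℝ)+1 := by
  induction k with
  | zero =>
    intro n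
    rw [genH_zero']
    have : (0:ℝ) ≤ (n:ℝ) := Nat.cast_nonneg n
    linarith
  | succ k ih =>
    intro n
    rw [genH_succ_def]
    calc ∑ j ∈ Finset.Icc 1 (n+1), genH k j / (j:ℝ)
        ≤ ∑ _j ∈ Finset.Icc 1 (n+1), (1:ℝ) := by
          apply Finset.sum_le_sum
          intro j hj
          simp only [Finset.mem_Icc] at hj
          have hj0 : (0:ℝ) < j := by exact_mod_cast hj.1
          rw [div_le_one hj0]
          obtain ⟨i, rfl⟩ : ∃ i, j = i + 1 := ⟨j - 1, by omega⟩
          have := ih i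
          push_cast
          push_cast at this
          linarith
      _ = (n:ℝ)+1 := by simp [Nat.card_Icc]

lemma genH_succ' (k m : ℕ) :
    genH (k+1) (m+1) = ∑ i ∈ Finset.range (m+1), genH k (i+1) / ((i:ℝ)+1) := by
  rw [genH_succ_def, ← Finset.Ico_add_one_right_eq_Icc, Finset.sum_Ico_eq_sum_range]
  apply Finset.sum_congr (by norm_num)
  intro i _
  rw [add_comm 1 i]
  push_cast
  ring_nf

lemma choose_div_eq (m n : ℕ) :
    (m.choose n : ℝ) / ((n:ℝ)+1) = ((m+1).choose (n+1) : ℝ) / ((m:ℝ)+1) := by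
  have h := Nat.add_one_mul_choose_eq m n
  have h' : ((m:ℝ)+1) * (m.choose n : ℝ) = ((m+1).choose (n+1) : ℝ) * ((n:ℝ)+1) := by
    exact_mod_cast congrArg (fun x : ℕ => (x:ℝ)) h
  have hm : ((m:ℝ)+1) ≠ 0 := by positivity
  have hn : ((n:ℝ)+1) ≠ 0 := by positivity
  field_simp
  linarith [h']

lemma alt_sum (m : ℕ) :
    ∑ n ∈ Finset.range (m+1), (-1:ℝ)^n * (((m+1).choose (n+1) : ℕ) : ℝ) = 1 := by
  have h := Int.alternating_sum_range_choose_of_ne (n := m+1) (by omega)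
  have h2 : ∑ i ∈ Finset.range (m+2), (-1:ℝ)^i * (((m+1).choose i : ℕ) : ℝ) = 0 := by
    exact_mod_cast h
  rw [Finset.sum_range_succ'] at h2
  simp only [pow_succ, pow_zero, one_mul, Nat.choose_zero_right, Nat.cast_one] at h2
  have : ∑ i ∈ Finset.range (m+1), (-1:ℝ)^i * (-1) * (((m+1).choose (i+1) : ℕ) : ℝ)
      = -∑ i ∈ Finset.range (m+1), (-1:ℝ)^i * (((m+1).choose (i+1) : ℕ) : ℝ) := by
    rw [← Finset.sum_neg_distrib]
    apply Finset.sum_congr rfl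
    intro i _
    ring
  rw [this] at h2
  linarith

lemma sum_choose_cast (m n : ℕ) :
    ∑ i ∈ Finset.range (m+1), ((i.choose n : ℕ) : ℝ) = (((m+1).choose (n+1) : ℕ) : ℝ) := by
  rw [← Nat.cast_sum]
  congr 1
  rw [← Nat.sum_Icc_choose m n]
  symm
  apply Finset.sum_subset
  · intro i hi
    simp only [Finset.mem_Icc] at hi
    simp only [Finset.mem_range]
    omega
  · intro i hi hni
    simp only [Finset.mem_range] at hi
    simp only [Finset.mem_Icc] at hni
    exact Nat.choose_eq_zero_of_lt (by omega)

lemma key (k m : ℕ) :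
    genH k (m+1) / ((m:ℝ)+1)
      = ∑ n ∈ Finset.range (m+1), (-1:ℝ)^n * (m.choose n : ℝ) / ((n:ℝ)+1)^(k+1) := by
  induction k generalizing m with
  | zero =>
    rw [genH_zero']
    have : ∀ n ∈ Finset.range (m+1), (-1:ℝ)^n * (m.choose n:ℝ) / ((n:ℝ)+1)^(0+1)
        = (-1:ℝ)^n * (((m+1).choose (n+1) : ℕ):ℝ) * (1/((m:ℝ)+1)) := by
      intro n _
      rw [pow_one, mul_div_assoc, choose_div_eq]
      ring
    rw [Finset.sum_congr rfl this, ← Finset.sum_mul, alt_sum]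
    ring
  | succ k ih =>
    rw [genH_succ']
    have step1 : ∀ i ∈ Finset.range (m+1), genH k (i+1) / ((i:ℝ)+1)
        = ∑ n ∈ Finset.range (m+1), (-1:ℝ)^n * (i.choose n : ℝ) / ((n:ℝ)+1)^(k+1) := by
      intro i hi
      simp only [Finset.mem_range] at hi
      rw [ih i]
      apply Finset.sum_subset
      · exact Finset.range_subset_range.mpr (by omega)
      · intro n _ hn
        simp only [Finset.mem_range] at hn
        rw [Nat.choose_eq_zero_of_lt (by omega)]
        simp
    rw [Finset.sum_congr rfl step1, Finset.sum_comm]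
    rw [Finset.sum_div]
    apply Finset.sum_congr rfl
    intro n _
    have : ∀ i ∈ Finset.range (m+1), (-1:ℝ)^n * (i.choose n : ℝ) / ((n:ℝ)+1)^(k+1)
        = ((-1:ℝ)^n / ((n:ℝ)+1)^(k+1)) * ((i.choose n : ℕ):ℝ) := by
      intro i _; ring
    rw [Finset.sum_congr rfl this, ← Finset.mul_sum, sum_choose_cast]
    have hc := choose_div_eq m n
    have hn : ((n:ℝ)+1) ≠ 0 := by positivity
    have hm : ((m:ℝ)+1) ≠ 0 := by positivity
    rw [pow_succ]
    field_simp
    field_simp at hc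
    -- hc : (m.choose n : ℝ) * ((m:ℝ)+1) = ((m+1).choose (n+1) : ℝ) * ((n:ℝ)+1)  (maybe order diff)
    linear_combination (-((n:ℝ)+1)^(k+1)) * hc

lemma hasSum_choose_geom (n : ℕ) {y : ℝ} (hy : |y| < 1) :
    HasSum (fun m : ℕ => (m.choose n : ℝ) * y^m) (y^n / (1-y)^(n+1)) := by
  have h := hasSum_choose_mul_geometric_of_norm_lt_one (𝕜 := ℝ) n (r := y)
    (by rwa [Real.norm_eq_abs])
  have h2 := h.mul_left (y^n)
  have heq : (fun i : ℕ => y^n * ((((i+n).choose n : ℕ):ℝ) * y^i))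
      = fun i : ℕ => (((i+n).choose n : ℕ):ℝ) * y^(i+n) := by
    funext i; rw [pow_add]; ring
  rw [heq] at h2
  have h3 := (hasSum_nat_add_iff (f := fun m : ℕ => (m.choose n : ℝ) * y^m) n).mp h2
  convert h3 using 1
  case e'_3 => rfl
  have hz : ∑ i ∈ Finset.range n, ((i.choose n : ℕ):ℝ) * y^i = 0 := by
    apply Finset.sum_eq_zero
    intro i hi
    simp only [Finset.mem_range] at hi
    rw [Nat.choose_eq_zero_of_lt hi]
    simp
  rw [hz, add_zero, mul_one_div]

lemma G_identity (K : ℕ) {y : ℝ} (h0 : 0 ≤ y) (h1 : y < 1/2) :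
    (∑' m : ℕ, genH K (m+1) / ((m:ℝ)+1) * y^m) * (1 - y)
      = ∑' n : ℕ, ((-1:ℝ)^n * (1/((n:ℝ)+1)^(K+1))) * (y/(1-y))^n := by
  have hy1 : y < 1 := by linarith
  have h1y : (0:ℝ) < 1 - y := by linarith
  have hx0 : 0 ≤ y / (1-y) := div_nonneg h0 h1y.le
  have hx1 : y / (1-y) < 1 := (div_lt_one h1y).mpr (by linarith)
  have hyabs : |y| < 1 := by rw [abs_of_nonneg h0]; exact hy1
  set g : ℕ × ℕ → ℝ := fun p => ((-1:ℝ)^p.1 / ((p.1:ℝ)+1)^(K+1)) * ((p.2.choose p.1 : ℝ) * y^p.2)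
    with hg_def
  -- row sums
  have hrow : ∀ n : ℕ, HasSum (fun m => g (n, m))
      (((-1:ℝ)^n / ((n:ℝ)+1)^(K+1)) * (y^n / (1-y)^(n+1))) :=
    fun n => (hasSum_choose_geom n hyabs).mul_left _
  have habs : ∀ p : ℕ × ℕ, |g p| = (1 / ((p.1:ℝ)+1)^(K+1)) * ((p.2.choose p.1 : ℝ) * y^p.2) := by
    intro p
    have h1' : (0:ℝ) < ((p.1:ℝ)+1)^(K+1) := by positivity
    have h2' : (0:ℝ) ≤ (p.2.choose p.1 : ℝ) * y^p.2 := by positivity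
    rw [hg_def, abs_mul, abs_of_nonneg h2', abs_div, abs_pow, abs_pow, abs_neg, abs_one,
      one_pow, abs_of_nonneg (show (0:ℝ) ≤ (p.1:ℝ)+1 by positivity)]
  have habsrow : ∀ n : ℕ, HasSum (fun m => |g (n, m)|)
      ((1 / ((n:ℝ)+1)^(K+1)) * (y^n / (1-y)^(n+1))) := by
    intro n
    have := (hasSum_choose_geom n hyabs).mul_left (1 / ((n:ℝ)+1)^(K+1))
    convert this using 2 with m
    case e'_3 => rfl
    exact habs (n, m)
  have hrowval : ∀ n : ℕ, (1 / ((n:ℝ)+1)^(K+1)) * (y^n / (1-y)^(n+1)) ≤ (y/(1-y))^n * (1/(1-y)) := by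
    intro n
    have e1 : y^n / (1-y)^(n+1) = (y/(1-y))^n * (1/(1-y)) := by
      rw [div_pow, pow_succ]
      field_simp
    rw [e1]
    have h2' : (0:ℝ) ≤ (y/(1-y))^n * (1/(1-y)) := by positivity
    have h3' : (1 / ((n:ℝ)+1)^(K+1)) ≤ 1 := by
      rw [div_le_one (by positivity)]
      apply one_le_pow₀
      have : (0:ℝ) ≤ (n:ℝ) := Nat.cast_nonneg n
      linarith
    nlinarith
  have hsummable_abs : Summable fun p : ℕ × ℕ => |g p| := by
    apply (summable_prod_of_nonneg (fun p => abs_nonneg _)).mpr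
    constructor
    · exact fun n => (habsrow n).summable
    · apply Summable.of_nonneg_of_le (fun n => tsum_nonneg fun m => abs_nonneg _)
        (fun n => ?_) (((summable_geometric_of_lt_one hx0 hx1).mul_right (1/(1-y))))
      rw [(habsrow n).tsum_eq]
      exact hrowval n
  have hsummable : Summable g := by
    rw [← summable_abs_iff]
    exact hsummable_abs
  -- LHS tsum equals double tsum
  have hterm : ∀ m : ℕ, genH K (m+1) / ((m:ℝ)+1) * y^m = ∑' n : ℕ, g (n, m) := by
    intro m
    rw [key K m, Finset.sum_mul]
    rw [tsum_eq_sum (s := Finset.range (m+1)) ?_]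
    · apply Finset.sum_congr rfl
      intro n _
      simp only [hg_def]
      ring
    · intro n hn
      simp only [Finset.mem_range] at hn
      simp only [hg_def]
      rw [Nat.choose_eq_zero_of_lt (by omega)]
      simp
  calc (∑' m : ℕ, genH K (m+1) / ((m:ℝ)+1) * y^m) * (1 - y)
      = (∑' m : ℕ, ∑' n : ℕ, g (n, m)) * (1 - y) := by rw [tsum_congr hterm]
    _ = (∑' n : ℕ, ∑' m : ℕ, g (n, m)) * (1 - y) := by
        rw [Summable.tsum_comm (f := fun n m => g (n, m)) (by exact hsummable)]
    _ = ∑' n : ℕ, (((-1:ℝ)^n / ((n:ℝ)+1)^(K+1)) * (y^n / (1-y)^(n+1))) * (1 - y) := by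
        rw [← tsum_mul_right]
        exact tsum_congr fun n => by rw [(hrow n).tsum_eq]
    _ = ∑' n : ℕ, ((-1:ℝ)^n * (1/((n:ℝ)+1)^(K+1))) * (y/(1-y))^n := by
        apply tsum_congr
        intro n
        rw [div_pow, pow_succ]
        field_simp
        ring

lemma b_nonneg (K m : ℕ) : 0 ≤ genH K (m+1) / ((m:ℝ)+1) :=
  div_nonneg (genH_nonneg _ _) (by positivity)

lemma b_le_one (K m : ℕ) : genH K (m+1) / ((m:ℝ)+1) ≤ 1 :=
  (div_le_one (by positivity)).mpr (genH_le K m)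

lemma summable_b_pow (K : ℕ) {y : ℝ} (h0 : 0 ≤ y) (h1 : y < 1) :
    Summable (fun m : ℕ => genH K (m+1) / ((m:ℝ)+1) * y^m) := by
  apply Summable.of_nonneg_of_le
    (fun m => mul_nonneg (b_nonneg K m) (pow_nonneg h0 m))
    (fun m => ?_) (summable_geometric_of_lt_one h0 h1)
  calc genH K (m+1) / ((m:ℝ)+1) * y^m ≤ 1 * y^m := by
        apply mul_le_mul_of_nonneg_right (b_le_one K m) (pow_nonneg h0 m)
    _ = y^m := one_mul _

lemma integral_piece (K : ℕ) :
    (∫ x in (0 : ℝ)..(1 / 2), ∑' j : ℕ, x ^ j * genH K (j + 1))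
      = (∑' m : ℕ, genH K (m+1) / ((m:ℝ)+1) * (1/2:ℝ)^m) * (1/2) := by
  rw [intervalIntegral.integral_of_le (by norm_num : (0:ℝ) ≤ 1/2)]
  have hInt : ∀ j : ℕ, IntegrableOn (fun x : ℝ => x ^ j * genH K (j+1)) (Set.Ioc 0 (1/2)) :=
    fun j => ((continuous_pow j).mul continuous_const).integrableOn_Ioc
  have hval : ∀ j : ℕ, (∫ x in Set.Ioc (0:ℝ) (1/2), x ^ j * genH K (j+1))
      = genH K (j+1) / ((j:ℝ)+1) * (1/2:ℝ)^j * (1/2) := by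
    intro j
    rw [MeasureTheory.integral_mul_const, ← intervalIntegral.integral_of_le
      (by norm_num : (0:ℝ) ≤ 1/2), integral_pow]
    rw [zero_pow (by omega), pow_succ]
    push_cast
    ring
  have hnorm : ∀ j : ℕ, (∫ x in Set.Ioc (0:ℝ) (1/2), ‖x ^ j * genH K (j+1)‖)
      = genH K (j+1) / ((j:ℝ)+1) * (1/2:ℝ)^j * (1/2) := by
    intro j
    rw [← hval j]
    apply MeasureTheory.setIntegral_congr_fun measurableSet_Ioc
    intro x hx
    have : 0 ≤ x ^ j * genH K (j+1) :=
      mul_nonneg (pow_nonneg hx.1.le j) (genH_nonneg _ _)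
    simp only []
    rw [Real.norm_eq_abs, abs_of_nonneg this]
  have hsum : Summable fun j : ℕ => ∫ x in Set.Ioc (0:ℝ) (1/2), ‖x ^ j * genH K (j+1)‖ := by
    simp only [hnorm]
    exact ((summable_b_pow K (by norm_num) (by norm_num)).mul_right (1/2))
  rw [← MeasureTheory.integral_tsum_of_summable_integral_norm hInt hsum]
  rw [← tsum_mul_right]
  exact tsum_congr hval

lemma cauchy_piece (K : ℕ) :
    (∑' j : ℕ, (1 / 2 : ℝ) ^ j * genH (K+1) (j + 1))
      = 2 * (∑' m : ℕ, genH K (m+1) / ((m:ℝ)+1) * (1/2:ℝ)^m) := by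
  set f : ℕ → ℝ := fun i => genH K (i+1) / ((i:ℝ)+1) * (1/2:ℝ)^i with hf_def
  have hfn : Summable fun i => ‖f i‖ := by
    apply Summable.of_nonneg_of_le (fun i => norm_nonneg _) (fun i => ?_)
      (summable_geometric_of_lt_one (by norm_num : (0:ℝ) ≤ 1/2) (by norm_num))
    rw [Real.norm_eq_abs, abs_of_nonneg (mul_nonneg (b_nonneg K i) (by positivity))]
    calc genH K (i+1) / ((i:ℝ)+1) * (1/2:ℝ)^i ≤ 1 * (1/2:ℝ)^i :=
          mul_le_mul_of_nonneg_right (b_le_one K i) (by positivity)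
      _ = (1/2:ℝ)^i := one_mul _
  have hgn : Summable fun q : ℕ => ‖(1/2:ℝ)^q‖ := by
    simp only [Real.norm_eq_abs, abs_of_nonneg (by positivity : (0:ℝ) ≤ (1/2:ℝ)^_)]
    exact summable_geometric_of_lt_one (by norm_num) (by norm_num)
  have hC := hasSum_sum_range_mul_of_summable_norm hfn hgn
  have hsum_eq : ∀ n : ℕ, (∑ k ∈ Finset.range (n+1), f k * (1/2:ℝ)^(n-k))
      = (1/2:ℝ)^n * genH (K+1) (n+1) := by
    intro n
    rw [genH_succ' K n, Finset.mul_sum]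
    apply Finset.sum_congr rfl
    intro i hi
    simp only [Finset.mem_range] at hi
    have : (1/2:ℝ)^i * (1/2:ℝ)^(n-i) = (1/2:ℝ)^n := by
      rw [← pow_add]
      congr 1
      omega
    rw [hf_def]
    calc genH K (i+1) / ((i:ℝ)+1) * (1/2:ℝ)^i * (1/2:ℝ)^(n-i)
        = genH K (i+1) / ((i:ℝ)+1) * ((1/2:ℝ)^i * (1/2:ℝ)^(n-i)) := by ring
      _ = (1/2:ℝ)^n * (genH K (i+1) / ((i:ℝ)+1)) := by rw [this]; ring
  have hgeo : (∑' q : ℕ, (1/2:ℝ)^q) = 2 := by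
    rw [tsum_geometric_of_lt_one (by norm_num) (by norm_num)]
    norm_num
  have hC2 : HasSum (fun n : ℕ => (1/2:ℝ)^n * genH (K+1) (n+1))
      ((∑' n, f n) * ∑' q : ℕ, (1/2:ℝ)^q) := by
    have := hC
    rwa [funext hsum_eq] at this
  rw [hC2.tsum_eq, hgeo]
  ring

lemma tendsto_piece (K : ℕ) :
    Tendsto (fun N => ∑ j ∈ Finset.range N, (-1 : ℝ) ^ j / ((j : ℝ) + 1) ^ (K+1)) atTop
      (nhds ((∑' m : ℕ, genH K (m+1) / ((m:ℝ)+1) * (1/2:ℝ)^m) * (1/2))) := by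
  set S : ℝ := ∑' m : ℕ, genH K (m+1) / ((m:ℝ)+1) * (1/2:ℝ)^m with hS_def
  -- alternating series limit
  set u : ℕ → ℝ := fun j => 1 / ((j:ℝ)+1)^(K+1) with hu_def
  have hu_anti : Antitone u := by
    intro i j hij
    apply one_div_le_one_div_of_le (by positivity)
    apply pow_le_pow_left₀ (by positivity)
    exact_mod_cast by exact_mod_cast add_le_add_left (Nat.cast_le.mpr hij) 1
  have hu0 : Tendsto u atTop (nhds 0) := by
    apply squeeze_zero (fun j => by positivity) (fun j => ?_)
      tendsto_one_div_add_atTop_nhds_zero_nat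
    rw [hu_def]
    apply one_div_le_one_div_of_le (by positivity)
    calc (j:ℝ)+1 = ((j:ℝ)+1)^1 := (pow_one _).symm
      _ ≤ ((j:ℝ)+1)^(K+1) := by
          apply pow_le_pow_right₀ ?_ (by omega)
          have : (0:ℝ) ≤ (j:ℝ) := Nat.cast_nonneg j
          linarith
  obtain ⟨L, hL⟩ := hu_anti.tendsto_alternating_series_of_tendsto_zero hu0
  -- Abel
  have hAbel := Real.tendsto_tsum_powerSeries_nhdsWithin_lt hL
  -- composition with y ↦ y/(1-y)
  have hφ : Tendsto (fun y : ℝ => y/(1-y)) (nhdsWithin (1/2) (Set.Iio (1/2)))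
      (nhdsWithin 1 (Set.Iio 1)) := by
    apply tendsto_nhdsWithin_of_tendsto_nhds_of_eventually_within
    · have hc : ContinuousAt (fun y : ℝ => y/(1-y)) (1/2) := by
        apply ContinuousAt.div continuousAt_id (continuousAt_const.sub continuousAt_id)
        norm_num
      have := hc.tendsto
      norm_num at this
      exact this.mono_left nhdsWithin_le_nhds
    · filter_upwards [self_mem_nhdsWithin] with y hy
      simp only [Set.mem_Iio] at hy ⊢
      rw [div_lt_one (by linarith)]
      linarith
  have h2 := hAbel.comp hφ
  -- the G side
  have hG1 : Tendsto (fun y : ℝ => ∑' m : ℕ, genH K (m+1) / ((m:ℝ)+1) * y^m)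
      (nhdsWithin (1/2) (Set.Iio (1/2))) (nhds S) := by
    rw [hS_def]
    apply tendsto_tsum_of_dominated_convergence
      (bound := fun m : ℕ => (3/4:ℝ)^m)
      (summable_geometric_of_lt_one (by norm_num) (by norm_num))
    · intro m
      exact ((continuous_const.mul (continuous_pow m)).tendsto (1/2)).mono_left
        nhdsWithin_le_nhds
    · have hmem : Set.Ioo (0:ℝ) (1/2) ∈ nhdsWithin (1/2:ℝ) (Set.Iio (1/2)) := by
        apply Ioo_mem_nhdsLT_of_mem
        constructor <;> norm_num
      filter_upwards [hmem] with y hy m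
      have h0y : 0 ≤ y := hy.1.le
      have hy34 : y ≤ 3/4 := by linarith [hy.2]
      rw [Real.norm_eq_abs, abs_of_nonneg (mul_nonneg (b_nonneg K m) (pow_nonneg h0y m))]
      calc genH K (m+1) / ((m:ℝ)+1) * y^m ≤ 1 * y^m :=
            mul_le_mul_of_nonneg_right (b_le_one K m) (pow_nonneg h0y m)
        _ = y^m := one_mul _
        _ ≤ (3/4:ℝ)^m := pow_le_pow_left₀ h0y hy34 m
  have hG2 : Tendsto (fun y : ℝ => 1 - y) (nhdsWithin (1/2:ℝ) (Set.Iio (1/2)))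
      (nhds (1/2:ℝ)) := by
    have : Tendsto (fun y : ℝ => 1 - y) (nhds (1/2:ℝ)) (nhds (1 - 1/2 : ℝ)) :=
      (continuous_const.sub continuous_id).tendsto _
    norm_num at this
    exact this.mono_left nhdsWithin_le_nhds
  have hG : Tendsto (fun y : ℝ => (∑' m : ℕ, genH K (m+1) / ((m:ℝ)+1) * y^m) * (1 - y))
      (nhdsWithin (1/2:ℝ) (Set.Iio (1/2))) (nhds (S * (1/2))) := hG1.mul hG2
  -- the two functions agree eventually
  have hEq : (fun y : ℝ => (∑' m : ℕ, genH K (m+1) / ((m:ℝ)+1) * y^m) * (1 - y))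
      =ᶠ[nhdsWithin (1/2:ℝ) (Set.Iio (1/2))]
      (fun y : ℝ => ∑' n : ℕ, ((-1:ℝ)^n * u n) * (y/(1-y))^n) := by
    have hmem : Set.Ioo (0:ℝ) (1/2) ∈ nhdsWithin (1/2:ℝ) (Set.Iio (1/2)) := by
      apply Ioo_mem_nhdsLT_of_mem
      constructor <;> norm_num
    filter_upwards [hmem] with y hy
    exact G_identity K hy.1.le hy.2
  have h2' : Tendsto (fun y : ℝ => (∑' m : ℕ, genH K (m+1) / ((m:ℝ)+1) * y^m) * (1 - y))
      (nhdsWithin (1/2:ℝ) (Set.Iio (1/2))) (nhds L) := by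
    apply Tendsto.congr' hEq.symm
    have : (fun y : ℝ => ∑' n : ℕ, ((-1:ℝ)^n * u n) * (y/(1-y))^n)
        = (fun x : ℝ => ∑' n : ℕ, ((-1:ℝ)^n * u n) * x^n) ∘ (fun y : ℝ => y/(1-y)) := rfl
    rw [this]
    exact h2
  have hLS : L = S * (1/2) := tendsto_nhds_unique h2' hG
  have hfinal : Tendsto (fun N => ∑ j ∈ Finset.range N, (-1:ℝ)^j * u j) atTop
      (nhds (S * (1/2))) := hLS ▸ hL
  apply hfinal.congr
  intro N
  apply Finset.sum_congr rfl
  intro j _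
  rw [hu_def, mul_one_div]

end Helpers

/-- For every integer `k ≥ 1`, the alternating zeta value
`ζ̂(k) = ∑_{j=1}^{∞} (−1)^{j−1}/j^k` (the limit of partial sums) satisfies
`ζ̂(k) = ∫_0^{1/2} f_{k−1}(x) dx = (1/4)·f_k(1/2)`, where
`f_n(x) = ∑_{j=0}^{∞} x^j H_{j+1}^{(n)}`. -/
theorem stmt15 (k : ℕ) (hk : 1 ≤ k) :
    Tendsto (fun N => ∑ j ∈ Finset.range N, (-1 : ℝ) ^ j / ((j : ℝ) + 1) ^ k) atTop
      (nhds (∫ x in (0 : ℝ)..(1 / 2), ∑' j : ℕ, x ^ j * genH (k - 1) (j + 1))) ∧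
    (∫ x in (0 : ℝ)..(1 / 2), ∑' j : ℕ, x ^ j * genH (k - 1) (j + 1))
      = (1 / 4) * ∑' j : ℕ, (1 / 2 : ℝ) ^ j * genH k (j + 1) := by
  obtain ⟨K, rfl⟩ : ∃ K, k = K + 1 := ⟨k - 1, by omega⟩
  have hk1 : K + 1 - 1 = K := by omega
  rw [hk1, integral_piece K, cauchy_piece K]
  refine ⟨tendsto_piece K, by ring⟩
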